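/- Binary search per-round guarantee: if x_e ∉ I_δ (i.e., |f'(x_e)| ≥ C_δ/√T₀) and the current interval intersects I_δ, then the probability that the next interval intersects I_δ is at least 1 − (σ/(C_δ√(2π)))·exp(−C_δ²/(2σ²)). -/

import Mathlib

noncomputable section
open MeasureTheory ProbabilityTheory Set
open scoped NNReal Real ENNReal Topology

namespace BinarySearchAux

open Real Filter

lemma integral_rexp_quad {b : ℝ} (hb : 0 < b) (c : ℝ) :
    ∫ x : ℝ, rexp (-b * x ^ 2 + c * x) = Real.sqrt (π / b) * rexp (c ^ 2 / (4 * b)) := by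
  have key : ∀ x : ℝ, -b * x ^ 2 + c * x = -b * (x - c / (2 * b)) ^ 2 + c ^ 2 / (4 * b) := by
    intro x; field_simp; ring
  simp_rw [key, Real.exp_add, integral_mul_const]
  rw [integral_sub_right_eq_self (μ := volume) (fun x => rexp (-b * x ^ 2)) (c / (2 * b)),
    integral_gaussian]

lemma gaussianPDFReal_conv_zero {v₁ v₂ : ℝ≥0} (h₁ : v₁ ≠ 0) (h₂ : v₂ ≠ 0) (z : ℝ) :
    ∫ x : ℝ, gaussianPDFReal 0 v₁ x * gaussianPDFReal 0 v₂ (z - x) =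
      gaussianPDFReal 0 (v₁ + v₂) z := by
  have hs₁ : (0:ℝ) < v₁ := by positivity
  have hs₂ : (0:ℝ) < v₂ := by positivity
  set s₁ : ℝ := (v₁:ℝ) with hs1def
  set s₂ : ℝ := (v₂:ℝ) with hs2def
  have hB : (0:ℝ) < (s₁ + s₂) / (2 * s₁ * s₂) := by positivity
  have key : ∀ x : ℝ, gaussianPDFReal 0 v₁ x * gaussianPDFReal 0 v₂ (z - x)
      = (Real.sqrt (2 * π * s₁))⁻¹ * (Real.sqrt (2 * π * s₂))⁻¹ * rexp (-(z^2) / (2*s₂)) *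
        rexp (-((s₁ + s₂) / (2 * s₁ * s₂)) * x ^ 2 + (z / s₂) * x) := by
    intro x
    simp only [gaussianPDFReal, sub_zero, NNReal.coe_add]
    rw [mul_mul_mul_comm, ← Real.exp_add]
    conv_rhs => rw [mul_assoc, ← Real.exp_add]
    congr 1
    rw [← hs1def, ← hs2def]
    field_simp
    ring
  simp_rw [key, integral_const_mul, integral_rexp_quad hB]
  have hexp : -(z^2) / (2*s₂) + (z / s₂)^2 / (4 * ((s₁ + s₂) / (2 * s₁ * s₂)))
      = - z^2 / (2 * (s₁ + s₂)) := by
    field_simp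
    ring
  have hconst : (Real.sqrt (2 * π * s₁))⁻¹ * (Real.sqrt (2 * π * s₂))⁻¹ *
      Real.sqrt (π / ((s₁ + s₂) / (2 * s₁ * s₂))) = (Real.sqrt (2 * π * (s₁ + s₂)))⁻¹ := by
    rw [← Real.sqrt_inv, ← Real.sqrt_inv, ← Real.sqrt_mul (by positivity),
      ← Real.sqrt_mul (by positivity), ← Real.sqrt_inv]
    congr 1
    field_simp
  simp only [gaussianPDFReal, sub_zero, NNReal.coe_add]
  calc (Real.sqrt (2 * π * s₁))⁻¹ * (Real.sqrt (2 * π * s₂))⁻¹ * rexp (-(z^2)/(2*s₂)) *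
        (Real.sqrt (π / ((s₁ + s₂) / (2 * s₁ * s₂))) * rexp ((z / s₂)^2 / (4 * ((s₁ + s₂) / (2 * s₁ * s₂)))))
      = ((Real.sqrt (2 * π * s₁))⁻¹ * (Real.sqrt (2 * π * s₂))⁻¹ *
          Real.sqrt (π / ((s₁ + s₂) / (2 * s₁ * s₂)))) *
        rexp (-(z^2) / (2*s₂) + (z / s₂)^2 / (4 * ((s₁ + s₂) / (2 * s₁ * s₂)))) := by
        rw [Real.exp_add]; ring
    _ = _ := by rw [hexp, hconst]

lemma gaussianPDFReal_conv {v₁ v₂ : ℝ≥0} (h₁ : v₁ ≠ 0) (h₂ : v₂ ≠ 0) (μ₁ μ₂ z : ℝ) :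
    ∫ x : ℝ, gaussianPDFReal μ₁ v₁ x * gaussianPDFReal μ₂ v₂ (z - x) =
      gaussianPDFReal (μ₁ + μ₂) (v₁ + v₂) z := by
  have key : ∀ x : ℝ, gaussianPDFReal μ₁ v₁ x * gaussianPDFReal μ₂ v₂ (z - x)
      = (fun y => gaussianPDFReal 0 v₁ y * gaussianPDFReal 0 v₂ ((z - μ₁ - μ₂) - y)) (x - μ₁) := by
    intro x
    simp only [gaussianPDFReal, sub_zero]
    ring_nf
  simp_rw [key]
  rw [integral_sub_right_eq_self (μ := volume)
    (fun y => gaussianPDFReal 0 v₁ y * gaussianPDFReal 0 v₂ ((z - μ₁ - μ₂) - y)) μ₁,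
    gaussianPDFReal_conv_zero h₁ h₂]
  simp only [gaussianPDFReal, sub_zero]
  ring_nf

lemma gaussianPDFReal_le (μ : ℝ) (v : ℝ≥0) (x : ℝ) :
    gaussianPDFReal μ v x ≤ (Real.sqrt (2 * π * v))⁻¹ := by
  rw [gaussianPDFReal]
  refine mul_le_of_le_one_right (by positivity) ?_
  refine Real.exp_le_one_iff.2 ?_
  have h0 : (0:ℝ) ≤ (x - μ)^2 / (2 * (v:ℝ)) := by positivity
  rw [neg_div]
  linarith

lemma measurable_pdf2 (μ₂ : ℝ) (v₂ : ℝ≥0) :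
    Measurable (fun p : ℝ × ℝ => gaussianPDF (μ₂ + p.1) v₂ p.2) := by
  unfold gaussianPDF gaussianPDFReal
  exact ENNReal.measurable_ofReal.comp (by fun_prop)

lemma gaussianReal_conv (μ₁ μ₂ : ℝ) (v₁ v₂ : ℝ≥0) :
    ((gaussianReal μ₁ v₁).prod (gaussianReal μ₂ v₂)).map (fun p : ℝ × ℝ => p.1 + p.2)
      = gaussianReal (μ₁ + μ₂) (v₁ + v₂) := by
  by_cases h₁ : v₁ = 0
  · subst h₁
    rw [gaussianReal_zero_var, Measure.dirac_prod,
      Measure.map_map (by fun_prop) measurable_prodMk_left]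
    have : ((fun p : ℝ × ℝ => p.1 + p.2) ∘ Prod.mk μ₁) = (μ₁ + ·) := rfl
    rw [this, gaussianReal_map_const_add, zero_add, add_comm μ₂ μ₁]
  by_cases h₂ : v₂ = 0
  · subst h₂
    rw [gaussianReal_zero_var, Measure.prod_dirac,
      Measure.map_map (by fun_prop) (by fun_prop)]
    have : ((fun p : ℝ × ℝ => p.1 + p.2) ∘ (fun x => (x, μ₂))) = (· + μ₂) := rfl
    rw [this, gaussianReal_map_add_const, add_zero]
  have h12 : v₁ + v₂ ≠ 0 := by simp [h₁]
  ext s hs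
  rw [Measure.map_apply (by fun_prop) hs,
    Measure.prod_apply (hs.preimage (by fun_prop))]
  have h2 : ∀ x : ℝ, gaussianReal μ₂ v₂ (Prod.mk x ⁻¹' ((fun p : ℝ × ℝ => p.1 + p.2) ⁻¹' s))
      = ∫⁻ y in s, gaussianPDF (μ₂ + x) v₂ y := by
    intro x
    have : (Prod.mk x ⁻¹' ((fun p : ℝ × ℝ => p.1 + p.2) ⁻¹' s)) = (x + ·) ⁻¹' s := rfl
    rw [this, ← Measure.map_apply (by fun_prop) hs, gaussianReal_map_const_add x,
      gaussianReal_apply _ h₂]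
  simp_rw [h2]
  rw [gaussianReal_of_var_ne_zero _ h₁,
    lintegral_withDensity_eq_lintegral_mul _ (measurable_gaussianPDF _ _)
      ((measurable_pdf2 μ₂ v₂).lintegral_prod_right')]
  simp only [Pi.mul_apply]
  have swap1 : ∫⁻ x, gaussianPDF μ₁ v₁ x * ∫⁻ y in s, gaussianPDF (μ₂ + x) v₂ y
      = ∫⁻ x, ∫⁻ y in s, gaussianPDF (μ₂ + x) v₂ y * gaussianPDF μ₁ v₁ x := by
    congr 1 with x
    rw [← lintegral_const_mul' (gaussianPDF μ₁ v₁ x) _ (by simp [gaussianPDF])]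
    simp_rw [mul_comm]
  rw [swap1, lintegral_lintegral_swap]
  · have inner : ∀ y : ℝ, (∫⁻ x, gaussianPDF (μ₂ + x) v₂ y * gaussianPDF μ₁ v₁ x)
        = gaussianPDF (μ₁ + μ₂) (v₁ + v₂) y := by
      intro y
      have e1 : ∀ x : ℝ, gaussianPDF (μ₂ + x) v₂ y * gaussianPDF μ₁ v₁ x
          = ENNReal.ofReal (gaussianPDFReal (μ₂ + x) v₂ y * gaussianPDFReal μ₁ v₁ x) := by
        intro x
        rw [gaussianPDF, gaussianPDF, ← ENNReal.ofReal_mul (gaussianPDFReal_nonneg _ _ _)]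
      simp_rw [e1]
      rw [← ofReal_integral_eq_lintegral_ofReal]
      · have : ∀ x : ℝ, gaussianPDFReal (μ₂ + x) v₂ y * gaussianPDFReal μ₁ v₁ x
            = gaussianPDFReal μ₁ v₁ x * gaussianPDFReal μ₂ v₂ (y - x) := by
          intro x
          rw [mul_comm, gaussianPDFReal_sub]
        simp_rw [this, gaussianPDFReal_conv h₁ h₂, gaussianPDF]
      · refine (integrable_gaussianPDFReal μ₁ v₁).bdd_mul (c := (Real.sqrt (2 * π * v₂))⁻¹) ?_ ?_
        · exact (Continuous.aestronglyMeasurable (by unfold gaussianPDFReal; fun_prop))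
        · refine ae_of_all _ fun x => ?_
          rw [Real.norm_eq_abs, abs_of_nonneg (gaussianPDFReal_nonneg _ _ _)]
          exact gaussianPDFReal_le _ _ _
      · exact ae_of_all _ fun x =>
          mul_nonneg (gaussianPDFReal_nonneg _ _ _) (gaussianPDFReal_nonneg _ _ _)
    simp_rw [inner]
    rw [← gaussianReal_apply _ h12]
  · exact ((measurable_pdf2 μ₂ v₂).mul
      ((measurable_gaussianPDF μ₁ v₁).comp measurable_fst)).aemeasurable

lemma pi_gaussian_sum (μ : ℝ) (v : ℝ≥0) (n : ℕ) :
    (Measure.pi fun _ : Fin n => gaussianReal μ v).map (fun ω => ∑ t, ω t)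
      = gaussianReal (n * μ) (n * v) := by
  induction n with
  | zero =>
    have h : (fun ω : Fin 0 → ℝ => ∑ t, ω t) = fun _ => 0 := by funext ω; simp
    rw [h, Measure.map_const]
    simp
  | succ n ih =>
    have hmp := measurePreserving_piFinSuccAbove (fun _ : Fin (n+1) => gaussianReal μ v) 0
    have hsum : (fun ω : Fin (n+1) → ℝ => ∑ t, ω t)
        = (fun p : ℝ × (Fin n → ℝ) => p.1 + ∑ t, p.2 t)
          ∘ (MeasurableEquiv.piFinSuccAbove (fun _ => ℝ) 0) := by
      funext ω
      simp only [Function.comp_apply, MeasurableEquiv.piFinSuccAbove_apply]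
      rw [Fin.sum_univ_succAbove ω 0]
      rfl
    rw [hsum, ← Measure.map_map (by fun_prop) (MeasurableEquiv.measurable _), hmp.map_eq]
    have h2 : (fun p : ℝ × (Fin n → ℝ) => p.1 + ∑ t, p.2 t)
        = (fun q : ℝ × ℝ => q.1 + q.2) ∘ (Prod.map id (fun ω : Fin n → ℝ => ∑ t, ω t)) := rfl
    rw [h2, ← Measure.map_map (by fun_prop) (by fun_prop),
      ← Measure.map_prod_map _ _ measurable_id (by fun_prop),
      Measure.map_id, ih, gaussianReal_conv]
    congr 1
    · push_cast; ring
    · push_cast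
      ring

lemma gaussian_tail {M : ℝ} (hM : 0 < M) {V : ℝ≥0} (hV : V ≠ 0) :
    gaussianReal M V (Iic 0) ≤
      ENNReal.ofReal (Real.sqrt V / (Real.sqrt (2*π) * M) * rexp (-M^2 / (2*V))) := by
  rw [gaussianReal_apply_eq_integral _ hV]
  apply ENNReal.ofReal_le_ofReal
  have hs : (0:ℝ) < V := by positivity
  set s : ℝ := (V:ℝ) with hsdef
  have hint : IntegrableOn (fun x => (M - x) * rexp (-(x-M)^2/(2*s))) (Iic 0) := by
    have h1 : Integrable (fun t : ℝ => -(t * rexp (-(2*s)⁻¹ * t^2))) :=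
      (integrable_mul_exp_neg_mul_sq (by positivity)).neg
    have h2 := h1.comp_sub_right M
    refine (h2.congr ?_).integrableOn
    filter_upwards with x
    rw [neg_mul]
    ring_nf
  have hFTC : ∫ x in Iic (0:ℝ), (M - x) * rexp (-(x-M)^2/(2*s)) = s * rexp (-M^2/(2*s)) := by
    have hder : ∀ x ∈ Iic (0:ℝ),
        HasDerivAt (fun x => s * rexp (-(x-M)^2/(2*s))) ((M - x) * rexp (-(x-M)^2/(2*s))) x := by
      intro x _
      have h1 : HasDerivAt (fun x : ℝ => -(x-M)^2/(2*s)) (-(x-M)/s) x := by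
        have := (((hasDerivAt_id x).sub_const M).pow 2).neg.div_const (2*s)
        exact this.congr_deriv (by simp only [id]; norm_num; field_simp; ring)
      have := (h1.exp).const_mul s
      exact this.congr_deriv (by field_simp; ring)
    have hlim : Filter.Tendsto (fun x => s * rexp (-(x-M)^2/(2*s))) atBot (𝓝 0) := by
      have h0 : Filter.Tendsto (fun x : ℝ => M - x) atBot atTop := by
        rw [Filter.tendsto_atBot_atTop]
        intro b
        exact ⟨M - b, fun a ha => by linarith⟩
      have hsq : Filter.Tendsto (fun x : ℝ => (x - M)^2) atBot atTop := by
        refine (((tendsto_pow_atTop (two_ne_zero)).comp h0).congr ?_)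
        intro x
        simp only [Function.comp_apply]
        ring
      have h1 : Filter.Tendsto (fun x : ℝ => -(x-M)^2/(2*s)) atBot atBot := by
        apply Filter.Tendsto.atBot_div_const (by positivity)
        exact tendsto_neg_atTop_atBot.comp hsq
      have := (Real.tendsto_exp_atBot.comp h1).const_mul s
      simpa using this
    rw [integral_Iic_of_hasDerivAt_of_tendsto' hder hint hlim]
    norm_num
  have hmono : ∫ x in Iic (0:ℝ), gaussianPDFReal M V x
      ≤ ∫ x in Iic (0:ℝ), (Real.sqrt (2*π*s))⁻¹ / M * ((M - x) * rexp (-(x-M)^2/(2*s))) := by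
    refine setIntegral_mono_on (integrable_gaussianPDFReal M V).integrableOn
      ((hint.const_mul _)) measurableSet_Iic ?_
    intro x hx
    simp only [mem_Iic] at hx
    rw [gaussianPDFReal, ← hsdef]
    have h1 : (1:ℝ) ≤ (M - x)/M := by
      rw [le_div_iff₀ hM]
      linarith
    calc (Real.sqrt (2*π*s))⁻¹ * rexp (-(x - M)^2/(2*s))
        = (Real.sqrt (2*π*s))⁻¹ * rexp (-(x-M)^2/(2*s)) * 1 := by rw [mul_one]
      _ ≤ (Real.sqrt (2*π*s))⁻¹ * rexp (-(x-M)^2/(2*s)) * ((M - x)/M) :=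
          mul_le_mul_of_nonneg_left h1 (by positivity)
      _ = (Real.sqrt (2*π*s))⁻¹ / M * ((M - x) * rexp (-(x-M)^2/(2*s))) := by ring
  calc ∫ x in Iic (0:ℝ), gaussianPDFReal M V x
      ≤ (Real.sqrt (2*π*s))⁻¹ / M * (s * rexp (-M^2/(2*s))) := by
        rw [← hFTC, ← integral_const_mul]
        exact hmono
    _ = Real.sqrt s / (Real.sqrt (2*π) * M) * rexp (-M^2 / (2*s)) := by
        have h2 : Real.sqrt s * Real.sqrt s = s := Real.mul_self_sqrt hs.le
        rw [Real.sqrt_mul (by positivity)]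
        have hsq : (0:ℝ) < Real.sqrt s := Real.sqrt_pos.2 hs
        field_simp
        linear_combination (-1 : ℝ) * h2

lemma tail_bound (σ : ℝ) (hσ : 0 < σ) (T₀ : ℕ) (hT₀ : 1 ≤ T₀) (Cδ : ℝ) (hCδ : 0 < Cδ)
    {M : ℝ} (hM : Real.sqrt T₀ * Cδ ≤ M) :
    gaussianReal M ((T₀ : ℝ≥0) * Real.toNNReal (σ^2)) (Iic 0)
      ≤ ENNReal.ofReal (σ / (Cδ * Real.sqrt (2*π)) * rexp (-Cδ^2 / (2*σ^2))) := by
  have hT : (0:ℝ) < T₀ := by exact_mod_cast hT₀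
  have hsT : (0:ℝ) < Real.sqrt T₀ := Real.sqrt_pos.2 hT
  have hM0 : 0 < M := lt_of_lt_of_le (by positivity) hM
  have hV : ((T₀ : ℝ≥0) * Real.toNNReal (σ^2)) ≠ 0 := by
    simp only [ne_eq, mul_eq_zero, not_or]
    constructor
    · exact_mod_cast (by omega : T₀ ≠ 0)
    · simp [Real.toNNReal_eq_zero, not_le]
      positivity
  refine le_trans (gaussian_tail hM0 hV) (ENNReal.ofReal_le_ofReal ?_)
  have hVr : (((T₀ : ℝ≥0) * Real.toNNReal (σ^2) : ℝ≥0) : ℝ) = (T₀ : ℝ) * σ^2 := by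
    push_cast [Real.coe_toNNReal _ (sq_nonneg σ)]
    ring
  rw [hVr]
  have hsqrtV : Real.sqrt ((T₀ : ℝ) * σ^2) = Real.sqrt T₀ * σ := by
    rw [Real.sqrt_mul (by positivity), Real.sqrt_sq hσ.le]
  have hsqT : Real.sqrt T₀ * Real.sqrt T₀ = (T₀:ℝ) := Real.mul_self_sqrt hT.le
  have h2pi : (0:ℝ) < Real.sqrt (2*π) := Real.sqrt_pos.2 (by positivity)
  have hfac1 : Real.sqrt ((T₀ : ℝ) * σ^2) / (Real.sqrt (2*π) * M) ≤ σ / (Cδ * Real.sqrt (2*π)) := by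
    rw [hsqrtV, div_le_div_iff₀ (by positivity) (by positivity)]
    calc Real.sqrt T₀ * σ * (Cδ * Real.sqrt (2*π)) = (Real.sqrt T₀ * Cδ) * (σ * Real.sqrt (2*π)) := by ring
      _ ≤ M * (σ * Real.sqrt (2*π)) := by
          apply mul_le_mul_of_nonneg_right hM (by positivity)
      _ = σ * (Real.sqrt (2*π) * M) := by ring
  have hfac2 : rexp (-M^2 / (2*((T₀ : ℝ) * σ^2))) ≤ rexp (-Cδ^2 / (2*σ^2)) := by
    apply Real.exp_le_exp.2
    rw [neg_div, neg_div, neg_le_neg_iff, div_le_div_iff₀ (by positivity) (by positivity)]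
    have hM2 : (T₀:ℝ) * Cδ^2 ≤ M^2 := by
      have h := mul_le_mul hM hM (by positivity) hM0.le
      have e : (T₀:ℝ) * Cδ^2 = (Real.sqrt T₀ * Cδ) * (Real.sqrt T₀ * Cδ) := by
        linear_combination (-(Cδ^2)) * hsqT
      calc (T₀:ℝ) * Cδ^2 = (Real.sqrt T₀ * Cδ) * (Real.sqrt T₀ * Cδ) := e
        _ ≤ M * M := h
        _ = M^2 := by ring
    nlinarith [sq_nonneg σ, sq_nonneg Cδ]
  calc Real.sqrt ((T₀ : ℝ) * σ^2) / (Real.sqrt (2*π) * M) * rexp (-M^2 / (2*((T₀ : ℝ) * σ^2)))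
      ≤ σ / (Cδ * Real.sqrt (2*π)) * rexp (-Cδ^2 / (2*σ^2)) := by
        apply mul_le_mul hfac1 hfac2 (Real.exp_pos _).le (by positivity)

end BinarySearchAux

open BinarySearchAux

/-- Binary search per-round guarantee: if the current interval `(a,b)` intersects
`I_δ = {y : |f'(y)| < C_δ/√T₀}` but the midpoint `m = (a+b)/2` does not belong to `I_δ`,
then the next half-interval (chosen by the sign of the average of `T₀` i.i.d.
`N(f'(m), σ²)` observations) intersects `I_δ` with probability at least
`1 − (σ/(C_δ√(2π)))·exp(−C_δ²/(2σ²))`. -/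
theorem binary_search_step (σ : ℝ) (hσ : 0 < σ) (T₀ : ℕ) (hT₀ : 1 ≤ T₀)
    (fd : ℝ → ℝ) (hmono : Monotone fd)
    (Cδ : ℝ) (hCδ : 0 < Cδ)
    (Iδ : Set ℝ) (hIδ : Iδ = {y | |fd y| < Cδ / Real.sqrt T₀})
    (a b : ℝ) (hab : a < b) (hint : (Ioo a b ∩ Iδ).Nonempty)
    (m : ℝ) (hm : m = (a + b) / 2) (hmout : m ∉ Iδ) :
    (Measure.pi fun _ : Fin T₀ => gaussianReal (fd m) (Real.toNNReal (σ ^ 2)))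
      {ω | ((if 0 < (∑ t : Fin T₀, ω t) / T₀ then Ioo a m else Ioo m b) ∩ Iδ).Nonempty} ≥
      ENNReal.ofReal (1 - σ / (Cδ * Real.sqrt (2 * π)) * Real.exp (-Cδ ^ 2 / (2 * σ ^ 2))) := by
  classical
  set P := Measure.pi fun _ : Fin T₀ => gaussianReal (fd m) (Real.toNNReal (σ ^ 2)) with hP
  have hT : (0:ℝ) < T₀ := by exact_mod_cast hT₀
  have hsT : (0:ℝ) < Real.sqrt T₀ := Real.sqrt_pos.2 hT
  have hmeas : Measurable fun ω : Fin T₀ → ℝ => ∑ t, ω t := by fun_prop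
  have hmap := pi_gaussian_sum (fd m) (Real.toNNReal (σ ^ 2)) T₀
  set B : Set (Fin T₀ → ℝ) := {ω | 0 < ∑ t, ω t} with hBdef
  have hBmeas : MeasurableSet B := measurableSet_lt measurable_const hmeas
  have hBeq : B = (fun ω : Fin T₀ → ℝ => ∑ t, ω t) ⁻¹' (Ioi 0) := rfl
  have hBceq : Bᶜ = (fun ω : Fin T₀ → ℝ => ∑ t, ω t) ⁻¹' (Iic 0) := by
    ext ω
    simp [hBdef, not_lt]
  have hiff : ∀ ω : Fin T₀ → ℝ, (0 < (∑ t, ω t) / (T₀:ℝ)) ↔ ω ∈ B := by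
    intro ω
    simp only [hBdef, mem_setOf_eq]
    constructor
    · intro h
      have := mul_pos h hT
      rwa [div_mul_cancel₀ _ (ne_of_gt hT)] at this
    · intro h
      exact div_pos h hT
  have hmnot : Cδ / Real.sqrt T₀ ≤ |fd m| := by
    rw [hIδ] at hmout
    simpa [not_lt] using hmout
  obtain ⟨y, hy⟩ := hint
  have hyIoo : y ∈ Ioo a b := hy.1
  have hyIδ : |fd y| < Cδ / Real.sqrt T₀ := by
    have := hy.2
    rw [hIδ] at this
    exact this
  have hbound_nonneg : 0 ≤ σ / (Cδ * Real.sqrt (2 * π)) * Real.exp (-Cδ ^ 2 / (2 * σ ^ 2)) := by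
    positivity
  have hofReal : ENNReal.ofReal (1 - σ / (Cδ * Real.sqrt (2 * π)) * Real.exp (-Cδ ^ 2 / (2 * σ ^ 2)))
      = 1 - ENNReal.ofReal (σ / (Cδ * Real.sqrt (2 * π)) * Real.exp (-Cδ ^ 2 / (2 * σ ^ 2))) := by
    rw [ENNReal.ofReal_sub _ hbound_nonneg, ENNReal.ofReal_one]
  rcases le_or_gt 0 (fd m) with hsgn | hsgn
  -- Case fd m ≥ Cδ/√T₀ > 0 : good event contains B
  · have hfdm : Cδ / Real.sqrt T₀ ≤ fd m := by
      rwa [abs_of_nonneg hsgn] at hmnot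
    have hylt : y < m := by
      by_contra hcon
      push_neg at hcon
      have h1 : fd m ≤ fd y := hmono hcon
      have : Cδ / Real.sqrt T₀ ≤ |fd y| := by
        rw [abs_of_nonneg (le_trans hsgn h1)]
        linarith
      linarith
    have hsub : B ⊆ {ω : Fin T₀ → ℝ |
        ((if 0 < (∑ t, ω t) / (T₀:ℝ) then Ioo a m else Ioo m b) ∩ Iδ).Nonempty} := by
      intro ω hω
      have hc : 0 < (∑ t, ω t) / (T₀:ℝ) := (hiff ω).2 hω
      simp only [mem_setOf_eq, if_pos hc]
      exact ⟨y, ⟨hyIoo.1, hylt⟩, hy.2⟩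
    have hPBc : P Bᶜ ≤ ENNReal.ofReal (σ / (Cδ * Real.sqrt (2 * π)) * Real.exp (-Cδ ^ 2 / (2 * σ ^ 2))) := by
      rw [hBceq, ← Measure.map_apply hmeas measurableSet_Iic, hmap]
      apply tail_bound σ hσ T₀ hT₀ Cδ hCδ
      have hsqT : Real.sqrt T₀ * Real.sqrt T₀ = (T₀:ℝ) := Real.mul_self_sqrt hT.le
      have : Real.sqrt T₀ * Cδ = (T₀:ℝ) * (Cδ / Real.sqrt T₀) := by
        field_simp
        linear_combination hsqT
      rw [this]
      exact mul_le_mul_of_nonneg_left hfdm hT.le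
    have hPB : P B = 1 - P Bᶜ := by
      rw [prob_compl_eq_one_sub hBmeas, ENNReal.sub_sub_cancel ENNReal.one_ne_top prob_le_one]
    calc P {ω : Fin T₀ → ℝ |
          ((if 0 < (∑ t, ω t) / (T₀:ℝ) then Ioo a m else Ioo m b) ∩ Iδ).Nonempty}
        ≥ P B := measure_mono hsub
      _ = 1 - P Bᶜ := hPB
      _ ≥ 1 - ENNReal.ofReal (σ / (Cδ * Real.sqrt (2 * π)) * Real.exp (-Cδ ^ 2 / (2 * σ ^ 2))) :=
          tsub_le_tsub_left hPBc 1
      _ = ENNReal.ofReal (1 - σ / (Cδ * Real.sqrt (2 * π)) * Real.exp (-Cδ ^ 2 / (2 * σ ^ 2))) :=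
          hofReal.symm
  -- Case fd m ≤ -Cδ/√T₀ < 0 : good event contains Bᶜ
  · have hfdm : fd m ≤ -(Cδ / Real.sqrt T₀) := by
      rw [abs_of_neg hsgn] at hmnot
      linarith
    have hylt : m < y := by
      by_contra hcon
      push_neg at hcon
      have h1 : fd y ≤ fd m := hmono hcon
      have : Cδ / Real.sqrt T₀ ≤ |fd y| := by
        rw [abs_of_neg (by linarith : fd y < 0)]
        linarith
      linarith
    have hsub : Bᶜ ⊆ {ω : Fin T₀ → ℝ |
        ((if 0 < (∑ t, ω t) / (T₀:ℝ) then Ioo a m else Ioo m b) ∩ Iδ).Nonempty} := by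
      intro ω hω
      have hc : ¬ (0 < (∑ t, ω t) / (T₀:ℝ)) := fun h => hω ((hiff ω).1 h)
      simp only [mem_setOf_eq, if_neg hc]
      exact ⟨y, ⟨hylt, hyIoo.2⟩, hy.2⟩
    have hone : (⟨(-1:ℝ)^2, sq_nonneg _⟩ : ℝ≥0) = 1 := by
      ext; norm_num
    have hPB : P B ≤ ENNReal.ofReal (σ / (Cδ * Real.sqrt (2 * π)) * Real.exp (-Cδ ^ 2 / (2 * σ ^ 2))) := by
      rw [hBeq, ← Measure.map_apply hmeas measurableSet_Ioi, hmap]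
      set M' : ℝ := (T₀:ℝ) * fd m with hM'
      set V' : ℝ≥0 := (T₀ : ℝ≥0) * Real.toNNReal (σ^2) with hV'
      have hneg : gaussianReal M' V' (Ioi 0) = gaussianReal (-M') V' (Iio 0) := by
        have h1 := gaussianReal_map_const_mul (μ := M') (v := V') (-1)
        rw [show (NNReal.mk ((-1:ℝ)^2) (sq_nonneg _)) = 1 by ext; norm_num, one_mul] at h1
        have h2 : (gaussianReal M' V').map (fun x => (-1:ℝ) * x) (Iio 0)
            = gaussianReal M' V' (Ioi 0) := by
          rw [Measure.map_apply (by fun_prop) measurableSet_Iio]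
          congr 1
          ext x
          simp
        rw [← h2, h1]
        norm_num
      rw [hneg]
      refine le_trans (measure_mono Iio_subset_Iic_self) ?_
      apply tail_bound σ hσ T₀ hT₀ Cδ hCδ
      have hsqT : Real.sqrt T₀ * Real.sqrt T₀ = (T₀:ℝ) := Real.mul_self_sqrt hT.le
      have heq : Real.sqrt T₀ * Cδ = (T₀:ℝ) * (Cδ / Real.sqrt T₀) := by
        field_simp
        linear_combination hsqT
      rw [hM']
      have : (T₀:ℝ) * (Cδ / Real.sqrt T₀) ≤ -((T₀:ℝ) * fd m) := by
        rw [← mul_neg]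
        exact mul_le_mul_of_nonneg_left (by linarith) hT.le
      linarith [heq ▸ this]
    have hPBc : P Bᶜ = 1 - P B := prob_compl_eq_one_sub hBmeas
    calc P {ω : Fin T₀ → ℝ |
          ((if 0 < (∑ t, ω t) / (T₀:ℝ) then Ioo a m else Ioo m b) ∩ Iδ).Nonempty}
        ≥ P Bᶜ := measure_mono hsub
      _ = 1 - P B := hPBc
      _ ≥ 1 - ENNReal.ofReal (σ / (Cδ * Real.sqrt (2 * π)) * Real.exp (-Cδ ^ 2 / (2 * σ ^ 2))) :=
          tsub_le_tsub_left hPB 1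
      _ = ENNReal.ofReal (1 - σ / (Cδ * Real.sqrt (2 * π)) * Real.exp (-Cδ ^ 2 / (2 * σ ^ 2))) :=
          hofReal.symm
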